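/- Let S be a finite semigroup whose effective dimension over the complex numbers ℂ is n. Then there exists a finite field F and an injective map φ : S → Mat_{n×n}(F) with φ(st) = φ(s)φ(t) for all s, t ∈ S; that is, S has an effective representation of dimension n over some finite field. -/

import Mathlib

/-- `ℤ` is a Jacobson ring. -/
lemma int_isJacobsonRing : IsJacobsonRing ℤ := by
  rw [isJacobsonRing_iff_prime_eq]
  intro P hP
  rcases eq_or_ne P ⊥ with rfl | hP0
  · refine le_antisymm ?_ Ideal.le_jacobson
    intro x hx
    rw [Ideal.mem_bot]
    by_contra hx0
    obtain ⟨p, hple, hp⟩ := Nat.exists_infinite_primes (x.natAbs + 1)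
    have hmax : (Ideal.span {(p : ℤ)}).IsMaximal :=
      PrincipalIdealRing.isMaximal_of_irreducible (Nat.prime_iff_prime_int.mp hp).irreducible
    have hxmem : x ∈ Ideal.span {(p : ℤ)} :=
      Ideal.mem_sInf.mp hx ⟨bot_le, hmax⟩
    have hdvd : (p : ℤ) ∣ x := Ideal.mem_span_singleton.mp hxmem
    have hdvd' : p ∣ x.natAbs := by
      have := Int.natAbs_dvd_natAbs.mpr hdvd
      simpa using this
    have := Nat.le_of_dvd (Nat.pos_of_ne_zero (Int.natAbs_ne_zero.mpr hx0)) hdvd'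
    omega
  · haveI := hP
    exact Ideal.jacobson_eq_self_of_isMaximal (H := IsPrime.to_maximal_ideal hP0)

/-- A field that is a finitely generated `ℤ`-algebra is finite. -/
lemma finite_of_finiteType_int (F : Type*) [Field F] [Algebra ℤ F]
    [Algebra.FiniteType ℤ F] : Finite F := by
  haveI := int_isJacobsonRing
  have h1 := finite_of_finite_type_of_isJacobsonRing ℤ F
  haveI : Algebra.IsIntegral ℤ F := Algebra.IsIntegral.of_finite ℤ F
  have hchar : ringChar F ≠ 0 := by
    intro h0
    haveI : CharP F 0 := h0 ▸ ringChar.charP F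
    haveI : CharZero F := CharP.charP_to_charZero F
    have hinj : Function.Injective (algebraMap ℤ F) := by
      intro a b hab
      have : (a : F) = (b : F) := by simpa using hab
      exact_mod_cast this
    exact Int.not_isField
      ((Algebra.IsIntegral.isField_iff_isField hinj).mpr (Field.toIsField F))
  haveI := AddCommGroup.uniqueIntModule (M := F)
  have e : (AddCommGroup.toIntModule F) = (Algebra.toModule : Module ℤ F) :=
    Subsingleton.elim _ _
  have h2 : @Module.Finite ℤ F _ _ (AddCommGroup.toIntModule F) := by
    rw [e]; exact h1
  have htor : @Module.IsTorsion ℤ F _ _ (AddCommGroup.toIntModule F) := by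
    intro x
    refine ⟨⟨(ringChar F : ℤ), mem_nonZeroDivisors_of_ne_zero (by exact_mod_cast hchar)⟩, ?_⟩
    haveI : CharP F (ringChar F) := ringChar.charP F
    show ((ringChar F : ℤ)) • x = 0
    rw [natCast_zsmul, nsmul_eq_mul, CharP.cast_eq_zero F (ringChar F), zero_mul]
  exact @Module.finite_of_fg_torsion F _ _ h2 htor


/-- A nonzero element of a domain that is a finitely generated `ℤ`-algebra survives
in some finite-field quotient. -/
lemma exists_hom_to_finite_field (R : Type) [CommRing R] [IsDomain R] [Algebra ℤ R]
    [Algebra.FiniteType ℤ R] (D : R) (hD : D ≠ 0) :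
    ∃ (F : Type) (_ : Field F) (_ : Fintype F) (f : R →+* F), f D ≠ 0 := by
  have hDunit : IsUnit (algebraMap R (Localization.Away D) D) :=
    IsLocalization.Away.algebraMap_isUnit D
  have hnontriv : Nontrivial (Localization.Away D) := by
    have halg : Function.Injective (algebraMap R (Localization.Away D)) :=
      IsLocalization.injective _ (powers_le_nonZeroDivisors_of_noZeroDivisors hD)
    exact ⟨algebraMap R _ 0, algebraMap R _ 1, fun h01 => zero_ne_one (halg h01)⟩
  obtain ⟨m, hm⟩ := Ideal.exists_maximal (Localization.Away D)
  haveI := hm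
  letI : Field (Localization.Away D ⧸ m) := Ideal.Quotient.field m
  have hT2 : Algebra.FiniteType R (Localization.Away D) := by
    haveI := IsLocalization.Away.finitePresentation (S := Localization.Away D) D
    infer_instance
  haveI : @IsScalarTower ℤ R (Localization.Away D) Algebra.toSMul Algebra.toSMul
      Algebra.toSMul :=
    IsScalarTower.of_algebraMap_eq' (Subsingleton.elim _ _)
  haveI hT3 : Algebra.FiniteType ℤ (Localization.Away D) :=
    Algebra.FiniteType.trans (inferInstance : Algebra.FiniteType ℤ R) hT2
  haveI hT4 : Algebra.FiniteType ℤ (Localization.Away D ⧸ m) :=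
    Algebra.FiniteType.of_surjective (Ideal.Quotient.mkₐ ℤ m)
      (Ideal.Quotient.mkₐ_surjective ℤ m)
  haveI : Finite (Localization.Away D ⧸ m) := finite_of_finiteType_int _
  exact ⟨Localization.Away D ⧸ m, inferInstance, Fintype.ofFinite _,
    (Ideal.Quotient.mk m).comp (algebraMap R _),
    (hDunit.map (Ideal.Quotient.mk m)).ne_zero⟩

set_option maxHeartbeats 1000000 in
set_option synthInstance.maxHeartbeats 1000000 in
/-- If the effective dimension of a finite semigroup `S` over `ℂ` is `n`, then
`S` has an effective representation of dimension `n` over some finite field. -/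
theorem exists_finite_field_effective_rep
    {S : Type*} [Semigroup S] [Finite S] (n : ℕ)
    (h : IsLeast {m : ℕ | ∃ φ : S → Matrix (Fin m) (Fin m) ℂ,
      Function.Injective φ ∧ ∀ s t : S, φ (s * t) = φ s * φ t} n) :
    ∃ (F : Type) (_ : Field F) (_ : Fintype F)
      (φ : S → Matrix (Fin n) (Fin n) F),
        Function.Injective φ ∧ ∀ s t : S, φ (s * t) = φ s * φ t := by
  classical
  obtain ⟨⟨φ, hinj, hmul⟩, -⟩ := h
  haveI := Fintype.ofFinite S
  -- the set of all matrix entries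
  set E : Set ℂ := Set.range (fun p : S × Fin n × Fin n => φ p.1 p.2.1 p.2.2) with hE
  set R : Subalgebra ℤ ℂ := Algebra.adjoin ℤ E with hRdef
  have hmemR : ∀ (s : S) (i j : Fin n), φ s i j ∈ R := fun s i j =>
    Algebra.subset_adjoin ⟨⟨s, i, j⟩, rfl⟩
  -- the representation with entries in R
  set ψ : S → Matrix (Fin n) (Fin n) R :=
    fun s => Matrix.of (fun i j => (⟨φ s i j, hmemR s i j⟩ : R)) with hψdef
  have hψval : ∀ s i j, ((ψ s i j : R) : ℂ) = φ s i j := fun s i j => rfl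
  have hψmul : ∀ s t, ψ (s * t) = ψ s * ψ t := by
    intro s t
    ext i j
    show ((ψ (s * t) i j : R) : ℂ) = ((ψ s * ψ t) i j : ℂ)
    rw [Matrix.mul_apply]
    push_cast
    simp only [hψval]
    rw [hmul s t, Matrix.mul_apply]
  -- separating entries
  have hsep : ∀ p : S × S, p.1 ≠ p.2 → ∃ i j, φ p.1 i j ≠ φ p.2 i j := by
    intro p hp
    by_contra hcon
    push_neg at hcon
    exact hp (hinj (by ext i j; exact hcon i j))
  choose is js hij using hsep
  set d : S × S → R := fun p =>
    if hp : p.1 = p.2 then 1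
    else ψ p.1 (is p hp) (js p hp) - ψ p.2 (is p hp) (js p hp) with hd
  have hd0 : ∀ p, d p ≠ 0 := by
    intro p
    by_cases hp : p.1 = p.2
    · simp only [hd, dif_pos hp]
      intro h1
      have : ((1 : R) : ℂ) = ((0 : R) : ℂ) := by rw [h1]
      simpa using this
    · simp only [hd, dif_neg hp]
      intro h1
      apply hij p hp
      have : ((ψ p.1 (is p hp) (js p hp) - ψ p.2 (is p hp) (js p hp) : R) : ℂ) = 0 := by
        rw [h1]; simp
      push_cast at this
      simp only [hψval] at this
      exact sub_eq_zero.mp this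
  set D : R := ∏ p : S × S, d p with hD
  have hD0 : D ≠ 0 := Finset.prod_ne_zero_iff.mpr (fun p _ => hd0 p)
  have hT1 : Algebra.FiniteType ℤ R := by
    rw [← Subalgebra.fg_iff_finiteType]
    have : E.Finite := Set.finite_range _
    rw [hRdef, ← this.coe_toFinset]
    exact Subalgebra.fg_adjoin_finset _
  obtain ⟨F, hF, hFt, f, hfD⟩ := exists_hom_to_finite_field R D hD0
  have hfd : ∀ p : S × S, f (d p) ≠ 0 := by
    intro p hp0
    apply hfD
    obtain ⟨c, hc⟩ := Finset.dvd_prod_of_mem d (Finset.mem_univ p)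
    rw [hD, hc, map_mul, hp0, zero_mul]
  refine ⟨F, hF, hFt, fun s => (ψ s).map f, ?_, ?_⟩
  · intro s t hst
    by_contra hne
    apply hfd (s, t)
    have hij' := congrFun (congrFun hst (is (s, t) hne)) (js (s, t) hne)
    simp only [Matrix.map_apply] at hij'
    simp only [hd, dif_neg hne, map_sub]
    rw [hij', sub_self]
  · intro s t
    show (ψ (s * t)).map f = (ψ s).map f * (ψ t).map f
    rw [hψmul s t, Matrix.map_mul]
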